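/- arXiv:1404.4453 — 2 statements merged into one kernel-verified Lean document; each statement's English description precedes it below -/
import Mathlib

section
/- With α_opt = ρ hᵀa / (1 + ρ‖h‖²), the minimum value of α² + ρ‖αh − a‖² over α ∈ ℝ equals ρ · aᵀ G a, where G = I_N − (ρ/(1+ρ‖h‖²)) h hᵀ. Consequently the computation rate (1/2)log⁺(ρ/(α² + ρ‖αh − a‖²)) is maximized over α precisely by maximizing 1/(aᵀGa). -/
open Matrix

/-- With `α_opt = ρ hᵀa/(1+ρ‖h‖²)`, the minimum of `α² + ρ‖αh − a‖²` equals `ρ aᵀGa`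
with `G = I − (ρ/(1+ρ‖h‖²)) h hᵀ`; hence `ρ aᵀGa ≤ α² + ρ‖αh − a‖²` for every `α`. -/
theorem min_value_is_rho_aGa (N : ℕ) (h : Fin N → ℝ) (a : Fin N → ℝ) (ρ : ℝ) (hρ : 0 < ρ) :
    let f : ℝ → ℝ := fun α => α ^ 2 + ρ * ∑ i, (α * h i - a i) ^ 2
    let αopt : ℝ := ρ * (∑ i, h i * a i) / (1 + ρ * ∑ i, h i ^ 2)
    let G : Matrix (Fin N) (Fin N) ℝ :=
      (1 : Matrix (Fin N) (Fin N) ℝ) - (ρ / (1 + ρ * ∑ i, h i ^ 2)) • Matrix.vecMulVec h h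
    f αopt = ρ * (a ⬝ᵥ G.mulVec a) ∧ ∀ α : ℝ, ρ * (a ⬝ᵥ G.mulVec a) ≤ f α := by
  intro f αopt G
  set S := ∑ i, h i ^ 2 with hS
  set T := ∑ i, h i * a i with hT
  set A := ∑ i, a i ^ 2 with hA
  have hSpos : 0 ≤ S := Finset.sum_nonneg fun i _ => sq_nonneg _
  have hD : (0:ℝ) < 1 + ρ * S := by nlinarith
  have hDne : (1 + ρ * S) ≠ 0 := ne_of_gt hD
  have hGa : a ⬝ᵥ G.mulVec a = A - ρ / (1 + ρ * S) * T ^ 2 := by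
    simp only [G, Matrix.mulVec, dotProduct, Matrix.sub_apply, Matrix.one_apply,
      Matrix.smul_apply, Matrix.vecMulVec_apply, smul_eq_mul]
    have key : ∀ j, (∑ i, (((if j = i then (1:ℝ) else 0) - ρ / (1 + ρ * S) * (h j * h i)) * a i))
        = a j - ρ / (1 + ρ * S) * h j * T := by
      intro j
      have step : ∀ i ∈ Finset.univ,
          ((if j = i then (1:ℝ) else 0) - ρ / (1 + ρ * S) * (h j * h i)) * a i
          = (if j = i then (1:ℝ) else 0) * a i - ρ / (1 + ρ * S) * h j * (h i * a i) := by
        intro i _; ring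
      rw [Finset.sum_congr rfl step, Finset.sum_sub_distrib, ← Finset.mul_sum, ← hT]
      simp
    rw [Finset.sum_congr rfl fun j _ => by rw [key j]]
    have expand : ∀ j ∈ Finset.univ, a j * (a j - ρ / (1 + ρ * S) * h j * T)
        = a j ^ 2 - ρ / (1 + ρ * S) * T * (h j * a j) := by intro j _; ring
    rw [Finset.sum_congr rfl expand, Finset.sum_sub_distrib, ← Finset.mul_sum, ← hA, ← hT]
    ring
  have hfα : ∀ α : ℝ, f α = (1 + ρ * S) * α ^ 2 - 2 * ρ * T * α + ρ * A := by
    intro α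
    have hsum : ∑ i, (α * h i - a i) ^ 2 = α ^ 2 * S - 2 * α * T + A := by
      rw [hS, hT, hA, Finset.mul_sum, Finset.mul_sum, ← Finset.sum_sub_distrib,
        ← Finset.sum_add_distrib]
      exact Finset.sum_congr rfl fun i _ => by ring
    simp only [f, hsum]; ring
  constructor
  · rw [hfα, hGa]
    show (1 + ρ * S) * (ρ * T / (1 + ρ * S)) ^ 2 - 2 * ρ * T * (ρ * T / (1 + ρ * S)) + ρ * A
        = ρ * (A - ρ / (1 + ρ * S) * T ^ 2)
    field_simp
    ring
  · intro α
    rw [hfα, hGa, ← sub_nonneg]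
    have key : (1 + ρ * S) * α ^ 2 - 2 * ρ * T * α + ρ * A - ρ * (A - ρ / (1 + ρ * S) * T ^ 2)
        = ((1 + ρ * S) * α - ρ * T) ^ 2 / (1 + ρ * S) := by
      field_simp
      ring
    rw [key]
    exact div_nonneg (sq_nonneg _) hD.le
end

section
/- Under the constraints FᵀB = Iₙ, for fixed B with BᵀB = (1+β²)Iₙ, the forward filter minimizing the effective noise variance ε(F) = (σ_s²/n)·tr((F−B)(Iₙ)(F−B)ᵀ + β²FFᵀ) is F = B/(1+β²), i.e., ε(F) ≥ ε(B/(1+β²)) for all F ∈ ℝ^{n×n}, with minimum value σ_s²β². -/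
open Matrix

lemma trace_mul_transpose_self_nonneg {n : ℕ} (M : Matrix (Fin n) (Fin n) ℝ) :
    0 ≤ (M * Mᵀ).trace := by
  simp only [Matrix.trace, Matrix.diag, Matrix.mul_apply, Matrix.transpose_apply]
  exact Finset.sum_nonneg fun i _ => Finset.sum_nonneg fun j _ => mul_self_nonneg _

lemma trace_swap {n : ℕ} (X Y : Matrix (Fin n) (Fin n) ℝ) :
    (Y * Xᵀ).trace = (X * Yᵀ).trace := by
  rw [← Matrix.trace_transpose (Y * Xᵀ), Matrix.transpose_mul, Matrix.transpose_transpose]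

lemma trace_sub_expand {n : ℕ} (X Y : Matrix (Fin n) (Fin n) ℝ) :
    ((X - Y) * (X - Y)ᵀ).trace
      = (X * Xᵀ).trace - 2 * (X * Yᵀ).trace + (Y * Yᵀ).trace := by
  simp only [Matrix.sub_mul, Matrix.mul_sub, Matrix.transpose_sub, Matrix.trace_sub]
  rw [trace_swap X Y]; ring

/-- For fixed `B` with `BᵀB = (1+β²)I`, the forward filter minimizing
`ε(F) = (σ_s²/n)(tr((F−B)(F−B)ᵀ) + β²tr(FFᵀ))` is `F = B/(1+β²)`,
with minimum value `σ_s²β²`. -/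
theorem optimal_forward_filter (n : ℕ) (hn : 0 < n) (β σs : ℝ) (hβ : 0 < β) (hσs : 0 < σs)
    (B : Matrix (Fin n) (Fin n) ℝ)
    (hB : Bᵀ * B = (1 + β ^ 2) • (1 : Matrix (Fin n) (Fin n) ℝ)) :
    let ε : Matrix (Fin n) (Fin n) ℝ → ℝ := fun F =>
      (σs ^ 2 / n) * (((F - B) * (F - B)ᵀ).trace + β ^ 2 * (F * Fᵀ).trace)
    (∀ F : Matrix (Fin n) (Fin n) ℝ, ε ((1 / (1 + β ^ 2)) • B) ≤ ε F) ∧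
    ε ((1 / (1 + β ^ 2)) • B) = σs ^ 2 * β ^ 2 := by
  intro ε
  have hb2 : (0:ℝ) < 1 + β ^ 2 := by positivity
  have hn' : (0:ℝ) < n := by exact_mod_cast hn
  set s : ℝ := 1 / (1 + β ^ 2) with hs
  have hsb : s * (1 + β ^ 2) = 1 := by rw [hs]; field_simp
  have hBB : (B * Bᵀ).trace = (1 + β ^ 2) * n := by
    rw [Matrix.trace_mul_comm, hB, Matrix.trace_smul, Matrix.trace_one]
    simp [Fintype.card_fin]
  have hε : ∀ F : Matrix (Fin n) (Fin n) ℝ,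
      ε F = (σs ^ 2 / n) * ((1 + β ^ 2) * (F * Fᵀ).trace
              - 2 * (F * Bᵀ).trace + (1 + β ^ 2) * n) := by
    intro F
    simp only [ε, trace_sub_expand, hBB]
    ring
  have h1 : ((s • B) * (s • B)ᵀ).trace = s * n := by
    rw [Matrix.transpose_smul, Matrix.smul_mul, Matrix.mul_smul, Matrix.trace_smul,
      Matrix.trace_smul, hBB]
    simp only [smul_eq_mul]
    linear_combination s * (n : ℝ) * hsb
  have h2 : ((s • B) * Bᵀ).trace = n := by
    rw [Matrix.smul_mul, Matrix.trace_smul, hBB]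
    simp only [smul_eq_mul]
    linear_combination (n : ℝ) * hsb
  have hval : ε (s • B) = σs ^ 2 * β ^ 2 := by
    rw [hε, h1, h2]
    have h3 : (1 + β ^ 2) * (s * n) = n := by
      rw [← mul_assoc, mul_comm (1 + β ^ 2) s, hsb, one_mul]
    rw [h3]
    field_simp
    ring
  refine ⟨fun F => ?_, hval⟩
  rw [hval, hε]
  have key : (1 + β ^ 2) * (F * Fᵀ).trace - 2 * (F * Bᵀ).trace + (1 + β ^ 2) * n
      = (1 + β ^ 2) * ((F - s • B) * (F - s • B)ᵀ).trace + β ^ 2 * n := by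
    rw [trace_sub_expand, h1]
    have h2' : (F * (s • B)ᵀ).trace = s * (F * Bᵀ).trace := by
      rw [Matrix.transpose_smul, Matrix.mul_smul, Matrix.trace_smul]; simp
    rw [h2']
    linear_combination (2 * (F * Bᵀ).trace - (n : ℝ)) * hsb
  rw [key]
  have hnn := trace_mul_transpose_self_nonneg (F - s • B)
  have h4 : (σs ^ 2 / n) * ((1 + β ^ 2) * ((F - s • B) * (F - s • B)ᵀ).trace + β ^ 2 * n)
      = (σs ^ 2 / n) * (1 + β ^ 2) * ((F - s • B) * (F - s • B)ᵀ).trace + σs ^ 2 * β ^ 2 := by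
    field_simp
  rw [h4]
  have hc : (0:ℝ) ≤ (σs ^ 2 / n) * (1 + β ^ 2) := by positivity
  nlinarith [mul_nonneg hc hnn]
end
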